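/- Let A, B, X be bounded linear operators on a complex Hilbert space H, let m > 0 be a real number, and suppose X − mI is a positive operator. Then m‖Re(A) − Re(B)‖ ≤ w(Re(A)X − X Re(B)) ≤ (1/2) sup over θ ∈ ℝ of ‖(AX − XB) + e^{iθ}(XA − BX)‖ ≤ (‖AX − XB‖ + ‖XA − BX‖)/2, where Re(T) = (T + T*)/2 and w denotes the numerical radius. -/

import Mathlib

open ContinuousLinearMap

local notation "⟪" x ", " y "⟫" => @inner ℂ _ _ x y

/-- For a self-adjoint operator, the norm is bounded by any uniform bound on
`|re ⟪D x, x⟫|` over unit vectors. -/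
lemma sa_norm_le {H : Type*} [NormedAddCommGroup H] [InnerProductSpace ℂ H] [CompleteSpace H]
    {D : H →L[ℂ] H} (hD : IsSelfAdjoint D) {M : ℝ} (hM : 0 ≤ M)
    (h : ∀ x : H, ‖x‖ = 1 → |(⟪D x, x⟫).re| ≤ M) : ‖D‖ ≤ M := by
  have hsym : ∀ u v : H, ⟪D u, v⟫ = ⟪u, D v⟫ := by
    intro u v
    conv_lhs => rw [← hD.adjoint_eq]
    exact ContinuousLinearMap.adjoint_inner_left D v u
  have hall : ∀ x : H, |(⟪D x, x⟫).re| ≤ M * ‖x‖ ^ 2 := by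
    intro x
    rcases eq_or_ne x 0 with rfl | hx
    · simp
    · have hnx : ‖x‖ ≠ 0 := norm_ne_zero_iff.mpr hx
      set c : ℂ := ((‖x‖⁻¹ : ℝ) : ℂ) with hc
      have hu : ‖c • x‖ = 1 := by
        rw [norm_smul, hc]
        simp [_root_.abs_of_nonneg (inv_nonneg.mpr (norm_nonneg x)), inv_mul_cancel₀ hnx]
      have := h _ hu
      have hscale : (⟪D (c • x), c • x⟫) = (((‖x‖⁻¹)^2 : ℝ) : ℂ) * ⟪D x, x⟫ := by
        rw [map_smul, inner_smul_left, inner_smul_right, ← mul_assoc, hc, Complex.conj_ofReal]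
        push_cast
        ring
      rw [hscale] at this
      rw [Complex.re_ofReal_mul, abs_mul,
        _root_.abs_of_nonneg (sq_nonneg (‖x‖⁻¹))] at this
      calc |(⟪D x, x⟫).re| = (‖x‖^2) * ((‖x‖⁻¹)^2 * |(⟪D x, x⟫).re|) := by
            field_simp
        _ ≤ (‖x‖^2) * M := mul_le_mul_of_nonneg_left this (sq_nonneg _)
        _ = M * ‖x‖^2 := by ring
  have hre : ∀ x y : H, (⟪D x, y⟫).re ≤ (M/2) * (‖x‖^2 + ‖y‖^2) := by
    intro x y
    have hyx : (⟪D y, x⟫).re = (⟪D x, y⟫).re := by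
      rw [hsym y x, ← inner_conj_symm]
      exact Complex.conj_re _
    have e1 : (⟪D (x+y), x+y⟫).re - (⟪D (x-y), x-y⟫).re = 4 * (⟪D x, y⟫).re := by
      simp only [map_add, map_sub, inner_add_left, inner_add_right, inner_sub_left,
        inner_sub_right, Complex.sub_re, Complex.add_re]
      linarith
    have b1 : (⟪D (x+y), x+y⟫).re ≤ M * ‖x+y‖^2 := (abs_le.mp (hall (x+y))).2
    have b2 : -(M * ‖x-y‖^2) ≤ (⟪D (x-y), x-y⟫).re := (abs_le.mp (hall (x-y))).1
    have par : ‖x+y‖^2 + ‖x-y‖^2 = 2 * (‖x‖^2 + ‖y‖^2) := by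
      have := parallelogram_law_with_norm ℂ x y
      nlinarith [this]
    nlinarith
  refine ContinuousLinearMap.opNorm_le_bound D hM ?_
  intro x
  rcases eq_or_ne (D x) 0 with hDx | hDx
  · simp [hDx, mul_nonneg hM (norm_nonneg x)]
  · have hnDx : (0:ℝ) < ‖D x‖ := norm_pos_iff.mpr hDx
    set d : ℂ := ((‖x‖ / ‖D x‖ : ℝ) : ℂ) with hd
    have key := hre x (d • D x)
    have hinner : (⟪D x, d • D x⟫).re = (‖x‖ / ‖D x‖) * ‖D x‖^2 := by
      rw [inner_smul_right, hd, Complex.re_ofReal_mul, inner_self_eq_norm_sq_to_K]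
      norm_cast
    have hnorm : ‖d • D x‖ = ‖x‖ := by
      rw [norm_smul, hd]
      simp [_root_.abs_of_nonneg (div_nonneg (norm_nonneg x) (norm_nonneg (D x)))]
      field_simp
    rw [hinner, hnorm] at key
    have h2 : ‖x‖ * ‖D x‖ ≤ M * ‖x‖^2 := by
      have he : (‖x‖ / ‖D x‖) * ‖D x‖^2 = ‖x‖ * ‖D x‖ := by field_simp
      nlinarith [key, he]
    rcases eq_or_ne x 0 with rfl | hx
    · simp only [map_zero] at hDx
      exact absurd rfl hDx
    · have hnx : (0:ℝ) < ‖x‖ := norm_pos_iff.mpr hx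
      nlinarith [h2, hnx]

/-- The numerical radius of a bounded linear operator. -/
noncomputable def numRadius {E : Type*} [NormedAddCommGroup E] [InnerProductSpace ℂ E]
    (T : E →L[ℂ] E) : ℝ :=
  ⨆ x : {x : E // ‖x‖ = 1}, ‖(inner ℂ (T x.val) x.val : ℂ)‖

set_option maxHeartbeats 2000000 in
theorem stmt_15 {H : Type*} [NormedAddCommGroup H] [InnerProductSpace ℂ H] [CompleteSpace H]
    (A B X : H →L[ℂ] H) (m : ℝ) (hm : 0 < m)
    (hX : (X - (m : ℂ) • (1 : H →L[ℂ] H)).IsPositive)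
    (ReA ReB : H →L[ℂ] H)
    (hReA : ReA = (2 : ℂ)⁻¹ • (A + ContinuousLinearMap.adjoint A))
    (hReB : ReB = (2 : ℂ)⁻¹ • (B + ContinuousLinearMap.adjoint B)) :
    (m * ‖ReA - ReB‖ ≤ numRadius (ReA * X - X * ReB)) ∧
      (numRadius (ReA * X - X * ReB) ≤
        (1 / 2 : ℝ) * (⨆ θ : ℝ,
          ‖(A * X - X * B) + Complex.exp (θ * Complex.I) • (X * A - B * X)‖)) ∧
      ((1 / 2 : ℝ) * (⨆ θ : ℝ,
          ‖(A * X - X * B) + Complex.exp (θ * Complex.I) • (X * A - B * X)‖) ≤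
        (‖A * X - X * B‖ + ‖X * A - B * X‖) / 2) := by
  set U : H →L[ℂ] H := A * X - X * B with hU
  set V : H →L[ℂ] H := X * A - B * X with hV
  set S : H →L[ℂ] H := ReA * X - X * ReB with hS
  -- self-adjointness facts
  have hconj2 : (starRingEnd ℂ) ((2:ℂ)⁻¹) = (2:ℂ)⁻¹ := by
    simp [Complex.ext_iff]
  have h2sa : IsSelfAdjoint ((2:ℂ)⁻¹) := by
    rw [IsSelfAdjoint, Complex.star_def, hconj2]
  have hXsa : IsSelfAdjoint X := by
    have h1 : IsSelfAdjoint ((m:ℂ) • (1 : H →L[ℂ] H)) := by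
      refine IsSelfAdjoint.smul ?_ (IsSelfAdjoint.one (R := H →L[ℂ] H))
      rw [IsSelfAdjoint, Complex.star_def, Complex.conj_ofReal]
    have := hX.isSelfAdjoint.add h1
    simpa using this
  have hReAsa : IsSelfAdjoint ReA := by
    rw [hReA]
    refine h2sa.smul ?_
    simpa [ContinuousLinearMap.star_eq_adjoint] using IsSelfAdjoint.add_star_self A
  have hReBsa : IsSelfAdjoint ReB := by
    rw [hReB]
    refine h2sa.smul ?_
    simpa [ContinuousLinearMap.star_eq_adjoint] using IsSelfAdjoint.add_star_self B
  have hDsa : IsSelfAdjoint (ReA - ReB) := hReAsa.sub hReBsa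
  -- symmetric inner identities
  have symm_of : ∀ (T : H →L[ℂ] H), IsSelfAdjoint T → ∀ u v : H, ⟪T u, v⟫ = ⟪u, T v⟫ := by
    intro T hT u v
    conv_lhs => rw [← hT.adjoint_eq]
    exact ContinuousLinearMap.adjoint_inner_left T v u
  -- bounds on the θ-family
  have hFbound : ∀ θ : ℝ, ‖U + Complex.exp (θ * Complex.I) • V‖ ≤ ‖U‖ + ‖V‖ := by
    intro θ
    refine (norm_add_le _ _).trans ?_
    have : ‖Complex.exp (θ * Complex.I) • V‖ = ‖V‖ := by
      rw [norm_smul, Complex.norm_exp_ofReal_mul_I, one_mul]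
    rw [this]
  have hFbdd : BddAbove (Set.range fun θ : ℝ =>
      ‖U + Complex.exp (θ * Complex.I) • V‖) := by
    refine ⟨‖U‖ + ‖V‖, ?_⟩
    rintro _ ⟨θ, rfl⟩
    exact hFbound θ
  have hSup_nonneg : 0 ≤ ⨆ θ : ℝ, ‖U + Complex.exp (θ * Complex.I) • V‖ :=
    Real.iSup_nonneg fun θ => norm_nonneg _
  -- operator identity : S = 2⁻¹ • (U + adjoint V)
  have hop : S = (2:ℂ)⁻¹ • (U + ContinuousLinearMap.adjoint V) := by
    have hadjV : ContinuousLinearMap.adjoint V =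
        ContinuousLinearMap.adjoint A * X - X * ContinuousLinearMap.adjoint B := by
      rw [← ContinuousLinearMap.star_eq_adjoint, hV, star_sub, star_mul, star_mul,
        hXsa.star_eq, ContinuousLinearMap.star_eq_adjoint, ContinuousLinearMap.star_eq_adjoint]
    rw [hS, hadjV, hU, hReA, hReB]
    rw [smul_mul_assoc, mul_smul_comm, ← smul_sub]
    congr 1
    noncomm_ring
  -- the key pointwise identity
  have hkey : ∀ x : H, ⟪S x, x⟫ = 2⁻¹ * (⟪U x, x⟫ + (starRingEnd ℂ) ⟪V x, x⟫) := by
    intro x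
    rw [hop]
    rw [ContinuousLinearMap.smul_apply, inner_smul_left, ContinuousLinearMap.add_apply,
      inner_add_left, ContinuousLinearMap.adjoint_inner_left, ← inner_conj_symm (V x) x,
      hconj2, Complex.conj_conj]
  -- bound: for unit x, ‖⟪T x, x⟫‖ ≤ ‖T‖
  have hinner_bound : ∀ (T : H →L[ℂ] H) (x : H), ‖x‖ = 1 → ‖⟪T x, x⟫‖ ≤ ‖T‖ := by
    intro T x hx
    calc ‖⟪T x, x⟫‖ ≤ ‖T x‖ * ‖x‖ := norm_inner_le_norm _ _
      _ ≤ (‖T‖ * ‖x‖) * ‖x‖ := by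
          exact mul_le_mul_of_nonneg_right (T.le_opNorm x) (norm_nonneg x)
      _ = ‖T‖ := by rw [hx]; ring
  have hNbdd : BddAbove (Set.range fun x : {x : H // ‖x‖ = 1} => ‖⟪S x.val, x.val⟫‖) := by
    refine ⟨‖S‖, ?_⟩
    rintro _ ⟨⟨x, hx⟩, rfl⟩
    exact hinner_bound S x hx
  have hNR_nonneg : 0 ≤ numRadius S := Real.iSup_nonneg fun x => norm_nonneg _
  -- Part 2
  have part2 : numRadius S ≤ (1 / 2 : ℝ) * (⨆ θ : ℝ,
      ‖U + Complex.exp (θ * Complex.I) • V‖) := by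
    refine Real.iSup_le ?_ (by positivity)
    rintro ⟨x, hx⟩
    set a : ℂ := ⟪U x, x⟫ with ha
    set b : ℂ := ⟪V x, x⟫ with hb
    obtain ⟨θ, hθ⟩ : ∃ θ : ℝ, (starRingEnd ℂ) (Complex.exp (θ * Complex.I)) * b =
        (starRingEnd ℂ) b := by
      rcases eq_or_ne b 0 with hb0 | hb0
      · exact ⟨0, by simp [hb0]⟩
      · have hcb : (starRingEnd ℂ) b ≠ 0 := by simpa using hb0
        set z : ℂ := b / (starRingEnd ℂ) b with hz
        have habs : ‖z‖ = 1 := by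
          rw [hz, norm_div, Complex.norm_conj, div_self (norm_ne_zero_iff.mpr hb0)]
        refine ⟨z.arg, ?_⟩
        have hexp : Complex.exp (z.arg * Complex.I) = z := by
          have := Complex.norm_mul_exp_arg_mul_I z
          rwa [habs, Complex.ofReal_one, one_mul] at this
        rw [hexp, hz, map_div₀]
        rw [Complex.conj_conj]
        field_simp
    have hval : ⟪(U + Complex.exp (θ * Complex.I) • V) x, x⟫ = a + (starRingEnd ℂ) b := by
      rw [ContinuousLinearMap.add_apply, inner_add_left, ContinuousLinearMap.smul_apply,
        inner_smul_left, ← ha, ← hb, hθ]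
    calc ‖⟪S x, x⟫‖ = 2⁻¹ * ‖a + (starRingEnd ℂ) b‖ := by
          rw [hkey x, ← ha, ← hb, norm_mul]
          norm_num
      _ = 2⁻¹ * ‖⟪(U + Complex.exp (θ * Complex.I) • V) x, x⟫‖ := by rw [hval]
      _ ≤ 2⁻¹ * ‖U + Complex.exp (θ * Complex.I) • V‖ := by
          exact mul_le_mul_of_nonneg_left (hinner_bound _ x hx) (by norm_num)
      _ ≤ (1 / 2 : ℝ) * (⨆ θ : ℝ, ‖U + Complex.exp (θ * Complex.I) • V‖) := by
          rw [one_div]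
          exact mul_le_mul_of_nonneg_left (le_ciSup hFbdd θ) (by norm_num)
  -- Part 3
  have part3 : (1 / 2 : ℝ) * (⨆ θ : ℝ, ‖U + Complex.exp (θ * Complex.I) • V‖) ≤
      (‖U‖ + ‖V‖) / 2 := by
    have h := Real.iSup_le hFbound (by positivity)
    linarith
  -- Part 1
  have part1 : m * ‖ReA - ReB‖ ≤ numRadius S := by
    set D : H →L[ℂ] H := ReA - ReB with hD
    have main : ∀ δ : ℝ, 0 < δ →
        m * (‖D‖ - δ) - ‖X‖ * Real.sqrt (2 * δ * ‖D‖) ≤ numRadius S := by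
      intro δ hδ
      by_cases hcase : ‖D‖ - δ < 0
      · have : m * (‖D‖ - δ) - ‖X‖ * Real.sqrt (2 * δ * ‖D‖) ≤ 0 := by
          have h1 : m * (‖D‖ - δ) ≤ 0 := mul_nonpos_of_nonneg_of_nonpos hm.le hcase.le
          have h2 : 0 ≤ ‖X‖ * Real.sqrt (2 * δ * ‖D‖) :=
            mul_nonneg (norm_nonneg X) (Real.sqrt_nonneg _)
          linarith
        linarith [hNR_nonneg]
      · push_neg at hcase
        -- find an approximate norming unit vector
        have hex : ∃ x : H, ‖x‖ = 1 ∧ ‖D‖ - δ ≤ |(⟪D x, x⟫).re| := by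
          by_contra hcon
          push_neg at hcon
          have := sa_norm_le hDsa hcase (fun x hx => (hcon x hx).le)
          linarith
        obtain ⟨x, hx, hlam⟩ := hex
        set lam : ℝ := (⟪D x, x⟫).re with hlamdef
        -- approximate eigenvector estimate
        have hDx_le : ‖D x‖ ≤ ‖D‖ := by simpa [hx] using D.le_opNorm x
        have hsub : ‖D x - (lam : ℂ) • x‖^2 ≤ 2 * δ * ‖D‖ := by
          have hb := norm_sub_sq (𝕜 := ℂ) (E := H) (D x) ((lam : ℂ) • x)
          have h1 : RCLike.re (⟪D x, (lam : ℂ) • x⟫) = lam * lam := by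
            rw [inner_smul_right]
            simp [hlamdef]
          have h2 : ‖(lam : ℂ) • x‖ = |lam| := by
            rw [norm_smul, hx, mul_one]
            simp
          have hlam2 : (‖D‖ - δ)^2 ≤ lam^2 := by
            nlinarith [hlam, abs_nonneg lam, sq_abs lam, hcase]
          rw [hb, h1, h2, sq_abs]
          nlinarith [hDx_le, norm_nonneg (D x), hlam2]
        have hsubnorm : ‖D x - (lam : ℂ) • x‖ ≤ Real.sqrt (2 * δ * ‖D‖) := by
          rw [← Real.sqrt_sq (norm_nonneg (D x - (lam : ℂ) • x))]
          exact Real.sqrt_le_sqrt hsub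
        -- re ⟪S x, x⟫ = re ⟪X x, D x⟫
        have hSre : (⟪S x, x⟫).re = (⟪X x, D x⟫).re := by
          have e1 : ⟪S x, x⟫ = ⟪X x, ReA x⟫ - ⟪ReB x, X x⟫ := by
            rw [hS, ContinuousLinearMap.sub_apply, inner_sub_left,
              ContinuousLinearMap.mul_apply, ContinuousLinearMap.mul_apply,
              symm_of ReA hReAsa (X x) x, symm_of X hXsa (ReB x) x]
          have e2 : (⟪ReB x, X x⟫).re = (⟪X x, ReB x⟫).re := by
            rw [← inner_conj_symm]
            exact Complex.conj_re _
          rw [e1, Complex.sub_re, e2, hD, ContinuousLinearMap.sub_apply, inner_sub_right,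
            Complex.sub_re]
        have hdecomp : (⟪X x, D x⟫).re =
            lam * (⟪X x, x⟫).re + (⟪X x, D x - (lam : ℂ) • x⟫).re := by
          rw [inner_sub_right, Complex.sub_re, inner_smul_right, Complex.re_ofReal_mul]
          ring
        have hE : |(⟪X x, D x - (lam : ℂ) • x⟫).re| ≤ ‖X‖ * Real.sqrt (2 * δ * ‖D‖) := by
          calc |(⟪X x, D x - (lam : ℂ) • x⟫).re| ≤ ‖⟪X x, D x - (lam : ℂ) • x⟫‖ :=
                Complex.abs_re_le_norm _
            _ ≤ ‖X x‖ * ‖D x - (lam : ℂ) • x‖ := norm_inner_le_norm _ _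
            _ ≤ ‖X‖ * Real.sqrt (2 * δ * ‖D‖) := by
                have h1 : ‖X x‖ ≤ ‖X‖ := by simpa [hx] using X.le_opNorm x
                exact mul_le_mul h1 hsubnorm (norm_nonneg _) (norm_nonneg X)
        -- positivity : re ⟪X x, x⟫ ≥ m
        have hXm : m ≤ (⟪X x, x⟫).re := by
          have h0 := hX.2 x
          rw [ContinuousLinearMap.reApplyInnerSelf_apply] at h0
          have e : ((X - (m : ℂ) • (1 : H →L[ℂ] H)) x) = X x - (m : ℂ) • x := by
            simp
          rw [e, inner_sub_left, inner_smul_left, Complex.conj_ofReal] at h0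
          have e2 : (⟪x, x⟫ : ℂ) = 1 := by
            rw [inner_self_eq_norm_sq_to_K, hx]
            norm_num
          rw [e2, mul_one] at h0
          simp only [RCLike.re_to_complex, Complex.sub_re, Complex.ofReal_re] at h0
          linarith
        -- put everything together
        set r : ℝ := (⟪X x, x⟫).re with hr
        set E : ℝ := (⟪X x, D x - (lam : ℂ) • x⟫).re with hEdef
        have habs1 : |lam * r| - |E| ≤ |lam * r + E| := by
          have h3 := abs_add_le (lam * r + E) (-E)
          rw [add_neg_cancel_right, abs_neg] at h3
          linarith
        have h2 : m * (‖D‖ - δ) ≤ |lam * r| := by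
          rw [abs_mul, _root_.abs_of_nonneg (le_trans hm.le hXm)]
          calc m * (‖D‖ - δ) ≤ m * |lam| := by
                exact mul_le_mul_of_nonneg_left hlam hm.le
            _ ≤ |lam| * r := by
                have := abs_nonneg lam
                nlinarith [hXm]
        have hfinal : m * (‖D‖ - δ) - ‖X‖ * Real.sqrt (2 * δ * ‖D‖) ≤ ‖⟪S x, x⟫‖ := by
          have h4 : |(⟪S x, x⟫).re| = |lam * r + E| := by rw [hSre, hdecomp]
          have h5 : |(⟪S x, x⟫).re| ≤ ‖⟪S x, x⟫‖ := Complex.abs_re_le_norm _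
          have h6 := abs_le.mp hE
          rw [h4] at h5
          linarith [habs1]
        have hle : ‖⟪S x, x⟫‖ ≤ numRadius S := le_ciSup hNbdd ⟨x, hx⟩
        linarith
    -- take the limit δ → 0⁺
    have htend : Filter.Tendsto
        (fun δ : ℝ => m * (‖D‖ - δ) - ‖X‖ * Real.sqrt (2 * δ * ‖D‖))
        (nhdsWithin 0 (Set.Ioi 0)) (nhds (m * ‖D‖)) := by
      have hc : Continuous fun δ : ℝ => m * (‖D‖ - δ) - ‖X‖ * Real.sqrt (2 * δ * ‖D‖) := by
        continuity
      have h0v : m * (‖D‖ - 0) - ‖X‖ * Real.sqrt (2 * 0 * ‖D‖) = m * ‖D‖ := by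
        simp
      exact h0v ▸ (hc.tendsto 0).mono_left nhdsWithin_le_nhds
    refine le_of_tendsto htend ?_
    filter_upwards [self_mem_nhdsWithin] with δ hδ
    exact main δ hδ
  exact ⟨part1, part2, part3⟩
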